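/- Let g be a generator of F_q^× where q is an odd prime power, let k be odd with k | q-1 and 1 < k ≤ q-1, and write q - 1 = 2mk. For 0 ≤ i ≤ k-1 define b_i = (1 + g^{2mi})^{(q-3)/2} · g^{mi} · (-1)^i ∈ F_q. Then b_i = b_{k-i} for all 1 ≤ i ≤ k-1. -/

import Mathlib

theorem stmt_19 (F : Type*) [Field F] [Fintype F] (q k m : ℕ)
    (hq : Fintype.card F = q) (hodd : Odd q)
    (g : F) (hg : ∀ x : F, x ≠ 0 → ∃ n : ℕ, g ^ n = x)
    (hkodd : Odd k) (hk1 : 1 < k) (hm : q - 1 = 2 * m * k)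
    (b : ℕ → F)
    (hb : ∀ i, b i = (1 + g ^ (2 * m * i)) ^ ((q - 3) / 2) * g ^ (m * i) * (-1) ^ i) :
    ∀ i, 1 ≤ i → i ≤ k - 1 → b i = b (k - i) := by
  intro i hi1 hik
  classical
  have hcard : 2 ≤ q := hq ▸ Fintype.one_lt_card
  have hk3 : 3 ≤ k := by
    rcases hkodd with ⟨t, ht⟩; omega
  have hm1 : 1 ≤ m := by
    by_contra h
    have hm0 : m = 0 := by omega
    rw [hm0] at hm; simp at hm; omega
  have h6 : 6 ≤ 2 * m * k :=
    le_trans (by norm_num) (Nat.mul_le_mul (Nat.mul_le_mul (le_refl 2) hm1) hk3)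
  have hq7 : 7 ≤ q := by omega
  -- g ≠ 0
  have hg0 : g ≠ 0 := by
    intro h
    have hsub : (Finset.univ : Finset F) ⊆ {0, 1} := by
      intro x _
      rcases eq_or_ne x 0 with rfl | hx
      · simp
      · obtain ⟨n, hn⟩ := hg x hx
        cases n with
        | zero => simp at hn; simp [← hn]
        | succ n => rw [h] at hn; simp [pow_succ] at hn; simp [← hn]
    have hle := Finset.card_le_card hsub
    have h2 : ({0, 1} : Finset F).card ≤ 2 :=
      le_trans (Finset.card_insert_le _ _) (by simp)
    rw [Finset.card_univ, hq] at hle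
    omega
  -- order of g
  set u : Fˣ := Units.mk0 g hg0 with hu
  have hmem : ∀ x : Fˣ, x ∈ Subgroup.zpowers u := by
    intro x
    obtain ⟨n, hn⟩ := hg x x.ne_zero
    have hx : u ^ n = x := Units.ext (by simpa [hu] using hn)
    exact ⟨n, by simpa [zpow_natCast] using hx⟩
  have horder : orderOf u = q - 1 := by
    rw [orderOf_eq_card_of_forall_mem_zpowers hmem, Nat.card_eq_fintype_card,
      Fintype.card_units, hq]
  have hg1 : g ^ (q - 1) = 1 := by
    have := FiniteField.pow_card_sub_one_eq_one g hg0
    rwa [hq] at this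
  have hmk : g ^ (m * k) = -1 := by
    have hsq : g ^ (m * k) * g ^ (m * k) = 1 := by
      rw [← pow_add]
      have hMM : m * k + m * k = q - 1 := by rw [hm]; ring
      rw [hMM, hg1]
    rcases mul_self_eq_one_iff.mp hsq with h1 | h1
    · exfalso
      have hu1 : u ^ (m * k) = 1 := Units.ext (by simpa [hu] using h1)
      have hdvd : q - 1 ∣ m * k := horder ▸ orderOf_dvd_of_pow_eq_one hu1
      have hpos : 0 < m * k := by positivity
      have hle := Nat.le_of_dvd hpos hdvd
      have : q - 1 = m * k + m * k := by rw [hm]; ring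
      omega
    · exact h1
  -- main computation
  set n := (q - 3) / 2 with hn
  have hq2n : 2 * n + 1 = q - 2 := by
    rcases hodd with ⟨t, ht⟩; omega
  rw [hb i, hb (k - i)]
  set c := g ^ (m * i) with hc
  set d := g ^ (m * (k - i)) with hd
  have hcd : c * d = -1 := by
    rw [hc, hd, ← pow_add]
    have : m * i + m * (k - i) = m * k := by
      rw [← Nat.mul_add]; congr 1; omega
    rw [this]; exact hmk
  have hd0 : d ≠ 0 := pow_ne_zero _ hg0
  have hdq : d ^ (q - 1) = 1 := by
    rw [hd, ← pow_mul, mul_comm, pow_mul, hg1, one_pow]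
  have hdq2 : d ^ (q - 2) = -c := by
    apply mul_right_cancel₀ hd0
    calc d ^ (q - 2) * d = d ^ (q - 1) := by
          rw [← pow_succ]; congr 1; omega
      _ = 1 := hdq
      _ = -c * d := by linear_combination hcd
  have hsq2 : c ^ 2 * d ^ 2 = 1 := by
    rw [← mul_pow, hcd]; ring
  have hkey : (1 : F) + d ^ 2 = d ^ 2 * (1 + c ^ 2) := by
    linear_combination -hsq2
  have e1 : g ^ (2 * m * i) = c ^ 2 := by rw [hc, ← pow_mul]; congr 1; ring
  have e2 : g ^ (2 * m * (k - i)) = d ^ 2 := by rw [hd, ← pow_mul]; congr 1; ring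
  have e3 : (d ^ 2) ^ n * d = -c := by
    rw [← pow_mul, ← pow_succ, show 2 * n + 1 = q - 2 from hq2n, hdq2]
  have e4 : ((-1 : F)) ^ (k - i) = -(-1) ^ i := by
    rcases Nat.even_or_odd i with he | ho
    · have hko : Odd (k - i) := by
        rw [Nat.odd_iff]; rw [Nat.even_iff] at he
        rcases hkodd with ⟨t, ht⟩; omega
      rw [Odd.neg_one_pow hko, Even.neg_one_pow he]
    · have hke : Even (k - i) := by
        rw [Nat.even_iff]; rw [Nat.odd_iff] at ho
        rcases hkodd with ⟨t, ht⟩; omega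
      rw [Even.neg_one_pow hke, Odd.neg_one_pow ho, neg_neg]
  rw [e1, e2, hkey, mul_pow, e4]
  calc (1 + c ^ 2) ^ n * c * (-1) ^ i
      = (1 + c ^ 2) ^ n * (-(-c)) * (-1) ^ i := by ring
    _ = (1 + c ^ 2) ^ n * (-((d ^ 2) ^ n * d)) * (-1) ^ i := by rw [e3]
    _ = (d ^ 2) ^ n * (1 + c ^ 2) ^ n * d * -(-1) ^ i := by ring
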